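/- The map T(x) = m₂ + A(x − m₁) with A = Σ₂^{1/2}(Σ₂^{1/2} Σ₁ Σ₂^{1/2})^{-1/2} Σ₂^{1/2} pushes the Gaussian N(m₁, Σ₁) forward to N(m₂, Σ₂), i.e., T_# N(m₁,Σ₁) = N(m₂,Σ₂), provided Σ₁ and Σ₂ are symmetric positive definite. -/

import Mathlib

open MeasureTheory ProbabilityTheory Matrix

open scoped ComplexOrder in
/-- The square root of a positive semidefinite matrix (the definition removed from Mathlib). -/
noncomputable def Matrix.PosSemidef.sqrt {n 𝕜 : Type*} [Fintype n] [RCLike 𝕜] [DecidableEq n]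
    {A : Matrix n n 𝕜} (hA : A.PosSemidef) : Matrix n n 𝕜 :=
  hA.1.eigenvectorUnitary.1 * diagonal ((↑) ∘ Real.sqrt ∘ hA.1.eigenvalues) *
    (star hA.1.eigenvectorUnitary : Matrix n n 𝕜)

/-- A measure `μ` on `ℝⁿ` is Gaussian with mean `m` and covariance `S` iff every linear
functional pushes it forward to the corresponding real Gaussian. -/
def IsGaussianMV {n : ℕ} (μ : Measure (Fin n → ℝ))
    (m : Fin n → ℝ) (S : Matrix (Fin n) (Fin n) ℝ) : Prop :=
  ∀ a : Fin n → ℝ,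
    μ.map (fun x => a ⬝ᵥ x) =
      gaussianReal (a ⬝ᵥ m) (Real.toNNReal (a ⬝ᵥ S.mulVec a))

open scoped ComplexOrder in
lemma psd_sqrt_isHermitian {n 𝕜 : Type*} [Fintype n] [RCLike 𝕜] [DecidableEq n]
    {A : Matrix n n 𝕜} (hA : A.PosSemidef) : hA.sqrt.IsHermitian := by
  unfold Matrix.PosSemidef.sqrt
  have hD : (diagonal ((↑) ∘ Real.sqrt ∘ hA.1.eigenvalues) : Matrix n n 𝕜)ᴴ
      = diagonal ((↑) ∘ Real.sqrt ∘ hA.1.eigenvalues) := by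
    rw [diagonal_conjTranspose]
    congr 1
    funext i
    simp
  simp only [IsHermitian, conjTranspose_mul, hD, Matrix.mul_assoc]
  rw [star_eq_conjTranspose, conjTranspose_conjTranspose]

open scoped ComplexOrder in
lemma psd_sqrt_mul_self {n 𝕜 : Type*} [Fintype n] [RCLike 𝕜] [DecidableEq n]
    {A : Matrix n n 𝕜} (hA : A.PosSemidef) : hA.sqrt * hA.sqrt = A := by
  conv_rhs => rw [hA.1.spectral_theorem, Unitary.conjStarAlgAut_apply]
  unfold Matrix.PosSemidef.sqrt
  set U := hA.1.eigenvectorUnitary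
  have hU : (star U : Matrix n n 𝕜) * (U : Matrix n n 𝕜) = 1 := by
    exact Unitary.coe_star_mul_self U
  have hDD : (diagonal ((↑) ∘ Real.sqrt ∘ hA.1.eigenvalues) : Matrix n n 𝕜)
      * diagonal ((↑) ∘ Real.sqrt ∘ hA.1.eigenvalues)
      = diagonal (RCLike.ofReal ∘ hA.1.eigenvalues) := by
    rw [diagonal_mul_diagonal]
    congr 1
    funext i
    simp only [Function.comp_apply]
    rw [← RCLike.ofReal_mul, Real.mul_self_sqrt (hA.eigenvalues_nonneg i)]
  calc _ = (U : Matrix n n 𝕜) * diagonal ((↑) ∘ Real.sqrt ∘ hA.1.eigenvalues)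
        * ((star U : Matrix n n 𝕜) * (U : Matrix n n 𝕜))
        * diagonal ((↑) ∘ Real.sqrt ∘ hA.1.eigenvalues) * (star U : Matrix n n 𝕜) := by
        simp only [Matrix.mul_assoc]
    _ = _ := by rw [hU, Matrix.mul_one, Matrix.mul_assoc (U : Matrix n n 𝕜), hDD]

/-- The map `T x = m₂ + A (x - m₁)` with
`A = S₂^{1/2} (S₂^{1/2} S₁ S₂^{1/2})^{-1/2} S₂^{1/2}` pushes `N(m₁, S₁)` forward to
`N(m₂, S₂)`, provided `S₁, S₂` are symmetric positive definite. -/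
theorem gaussian_transport_map {n : ℕ}
    (m₁ m₂ : Fin n → ℝ)
    (S₁ S₂ : Matrix (Fin n) (Fin n) ℝ)
    (h₁ : S₁.PosDef) (h₂ : S₂.PosDef)
    (hM : (h₂.posSemidef.sqrt * S₁ * h₂.posSemidef.sqrt).PosSemidef)
    (μ : Measure (Fin n → ℝ)) [IsProbabilityMeasure μ]
    (hμ : IsGaussianMV μ m₁ S₁) :
    IsGaussianMV
      (μ.map fun x =>
        m₂ + (h₂.posSemidef.sqrt * (hM.sqrt)⁻¹ * h₂.posSemidef.sqrt).mulVec (x - m₁))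
      m₂ S₂ := by
  intro a
  set B := h₂.posSemidef.sqrt with hBdef
  set C := hM.sqrt with hCdef
  set A := B * C⁻¹ * B with hAdef
  -- symmetry facts
  have hBsym : Bᵀ = B := by
    have := (psd_sqrt_isHermitian h₂.posSemidef).eq
    rwa [Matrix.conjTranspose_eq_transpose_of_trivial] at this
  have hCsym : Cᵀ = C := by
    have := (psd_sqrt_isHermitian hM).eq
    rwa [Matrix.conjTranspose_eq_transpose_of_trivial] at this
  have hBB : B * B = S₂ := psd_sqrt_mul_self h₂.posSemidef
  have hCC : C * C = B * S₁ * B := psd_sqrt_mul_self hM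
  have hdetB : B.det ≠ 0 := by
    intro h
    have : S₂.det = 0 := by rw [← hBB, Matrix.det_mul, h, mul_zero]
    exact (h₂.det_pos).ne' this
  have hdetC : C.det ≠ 0 := by
    intro h
    have : (B * S₁ * B).det = 0 := by rw [← hCC, Matrix.det_mul, h, mul_zero]
    rw [Matrix.det_mul, Matrix.det_mul] at this
    rcases mul_eq_zero.mp this with h' | h'
    · rcases mul_eq_zero.mp h' with h'' | h''
      · exact hdetB h''
      · exact h₁.det_pos.ne' h''
    · exact hdetB h'
  have hAsym : Aᵀ = A := by
    rw [hAdef, Matrix.transpose_mul, Matrix.transpose_mul, Matrix.transpose_nonsing_inv,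
      hBsym, hCsym, Matrix.mul_assoc]
  -- key identity : A * S₁ * A = S₂
  have key : A * S₁ * A = S₂ := by
    have h1 : C⁻¹ * (C * C) * C⁻¹ = 1 := by
      rw [← Matrix.mul_assoc, Matrix.nonsing_inv_mul C (isUnit_iff_ne_zero.mpr hdetC), Matrix.one_mul,
        Matrix.mul_nonsing_inv C (isUnit_iff_ne_zero.mpr hdetC)]
    calc A * S₁ * A = B * (C⁻¹ * (B * S₁ * B) * C⁻¹) * B := by
          simp only [hAdef, Matrix.mul_assoc]
        _ = B * (C⁻¹ * (C * C) * C⁻¹) * B := by rw [hCC]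
        _ = S₂ := by rw [h1, Matrix.mul_one, hBB]
  -- the pushed-forward linear functional
  set b : Fin n → ℝ := a ᵥ* A with hbdef
  have hbA : A *ᵥ a = b := by rw [hbdef, ← Matrix.mulVec_transpose, hAsym]
  -- variance identity
  have hvar : b ⬝ᵥ S₁ *ᵥ b = a ⬝ᵥ S₂ *ᵥ a := by
    rw [← key, ← Matrix.mulVec_mulVec, ← Matrix.mulVec_mulVec, hbA,
      Matrix.dotProduct_mulVec a A, ← hbdef]
  -- measurability facts
  have hdot : ∀ c : Fin n → ℝ, Measurable fun x : Fin n → ℝ => c ⬝ᵥ x := by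
    intro c
    exact Finset.univ.measurable_sum fun i _ => by fun_prop
  have hT : Measurable fun x : Fin n → ℝ => m₂ + A *ᵥ (x - m₁) := by
    refine measurable_pi_lambda _ fun i => ?_
    have : (fun x : Fin n → ℝ => (m₂ + A *ᵥ (x - m₁)) i)
        = fun x => m₂ i + ((fun j => A i j) ⬝ᵥ x - (fun j => A i j) ⬝ᵥ m₁) := by
      funext x
      simp [Matrix.mulVec, dotProduct_sub]
    rw [this]
    exact measurable_const.add ((hdot _).sub_const _)
  -- compute the map
  have hcomp : (fun y : Fin n → ℝ => a ⬝ᵥ y) ∘ (fun x => m₂ + A *ᵥ (x - m₁))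
      = (fun t => t + (a ⬝ᵥ m₂ - b ⬝ᵥ m₁)) ∘ (fun x => b ⬝ᵥ x) := by
    funext x
    simp only [Function.comp_apply, dotProduct_add, Matrix.mulVec_sub,
      dotProduct_sub, Matrix.dotProduct_mulVec a A, ← hbdef]
    ring
  rw [Measure.map_map (hdot a) hT, hcomp,
    ← Measure.map_map (measurable_add_const _) (hdot b), hμ b,
    gaussianReal_map_add_const, hvar]
  congr 1
  ring
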